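/- Let A be the operator on ℝⁿ (n ≥ 3) given by A(x₁,...,xₙ) = (-x₁, x₂, ..., xₙ) and, for 1 ≤ j ≤ n-1, let Q_j(x₁,...,xₙ) = (0, x₃, x₄, ..., x_{j+1}, 0, ..., 0). Then A is an isometry, Q_j is j-nilpotent, A commutes with Q_j, and A + Q_j is a (2j-1)-isometry. -/

import Mathlib

open scoped BigOperators

open Polynomial in
lemma comp_sub_degree_lt' {m : ℕ} (p : ℝ[X]) (hp : p.degree < (m + 1 : ℕ)) :
    (p.comp (X + C 1) - p).degree < (m : ℕ) := by
  by_cases hp0 : p = 0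
  · rw [hp0]; simp only [zero_comp, sub_zero, degree_zero]; exact WithBot.bot_lt_coe (m : ℕ)
  · have hX : (X + C (1:ℝ)).natDegree = 1 := natDegree_X_add_C 1
    have hlc : (p.comp (X + C 1)).leadingCoeff = p.leadingCoeff := by
      rw [leadingCoeff_comp (by omega), (monic_X_add_C (1:ℝ)).leadingCoeff, one_pow, mul_one]
    have hc0 : p.comp (X + C 1) ≠ 0 := by
      intro h
      exact hp0 (leadingCoeff_eq_zero.mp (by rw [← hlc, h, leadingCoeff_zero]))
    have hdeg : (p.comp (X + C 1)).degree = p.degree := by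
      rw [degree_eq_natDegree hc0, degree_eq_natDegree hp0, natDegree_comp, hX, mul_one]
    have h1 : (p.comp (X + C 1) - p).degree < p.degree := hdeg ▸ degree_sub_lt hdeg hc0 hlc
    have h2 : p.degree ≤ (m : ℕ) := by
      rw [degree_eq_natDegree hp0] at hp ⊢
      exact_mod_cast Nat.lt_succ_iff.mp (by exact_mod_cast hp)
    exact lt_of_lt_of_le h1 h2

open Polynomial in
lemma fwdDiff_iter_poly_eval' (m : ℕ) :
    ∀ (p : ℝ[X]), p.degree < (m : ℕ) → ∀ y : ℕ,
      (fwdDiff 1)^[m] (fun k : ℕ => p.eval (k : ℝ)) y = 0 := by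
  induction m with
  | zero =>
    intro p hp y
    have : p = 0 := by
      rw [← degree_eq_bot]
      exact Nat.WithBot.lt_zero_iff.mp (by exact_mod_cast hp)
    simp [this]
  | succ m IH =>
    intro p hp y
    rw [Function.iterate_succ_apply]
    have hΔ : fwdDiff 1 (fun k : ℕ => p.eval (k : ℝ))
        = fun k : ℕ => (p.comp (X + C 1) - p).eval (k : ℝ) := by
      funext k
      simp only [fwdDiff, eval_sub, eval_comp, eval_add, eval_X, eval_C]
      push_cast
      ring
    rw [hΔ]
    exact IH _ (comp_sub_degree_lt' p hp) y

/-- `T` is an `m`-isometry on a real Hilbert space. -/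
def IsMIsometryR {H : Type*} [NormedAddCommGroup H] [InnerProductSpace ℝ H]
    (m : ℕ) (T : H →L[ℝ] H) : Prop :=
  ∀ x : H, ∑ k ∈ Finset.range (m + 1),
    (-1 : ℝ) ^ (m - k) * (m.choose k) * ‖(T ^ k) x‖ ^ 2 = 0

theorem stmt10 (n j : ℕ) (hn : 3 ≤ n) (hj1 : 1 ≤ j) (hj2 : j ≤ n - 1)
    (A Q : EuclideanSpace ℝ (Fin n) →L[ℝ] EuclideanSpace ℝ (Fin n))
    (hA : ∀ (x : EuclideanSpace ℝ (Fin n)) (i : Fin n),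
      A x i = if i.val = 0 then -(x i) else x i)
    (hQ : ∀ (x : EuclideanSpace ℝ (Fin n)) (i : Fin n),
      Q x i = if h : 1 ≤ i.val ∧ i.val ≤ j - 1
        then x ⟨i.val + 1, by have := i.2; omega⟩ else 0) :
    (∀ x, ‖A x‖ = ‖x‖) ∧ Q ^ j = 0 ∧ Q ^ (j - 1) ≠ 0 ∧ A * Q = Q * A ∧
      IsMIsometryR (2 * j - 1) (A + Q) := by
  -- Part 1 : A is an isometry
  have part1 : ∀ x, ‖A x‖ = ‖x‖ := by
    intro x
    rw [EuclideanSpace.norm_eq, EuclideanSpace.norm_eq]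
    congr 1
    apply Finset.sum_congr rfl
    intro i _
    rw [hA]
    split_ifs <;> simp
  -- powers of Q
  have hQpow : ∀ r, 1 ≤ r → ∀ (x : EuclideanSpace ℝ (Fin n)) (i : Fin n),
      (Q ^ r) x i = if h : 1 ≤ i.val ∧ i.val + r ≤ j
        then x ⟨i.val + r, by have := i.2; omega⟩ else 0 := by
    intro r hr
    induction r, hr using Nat.le_induction with
    | base =>
      intro x i
      rw [pow_one, hQ]
      by_cases h : 1 ≤ i.val ∧ i.val + 1 ≤ j
      · rw [dif_pos (by omega : 1 ≤ i.val ∧ i.val ≤ j - 1), dif_pos h]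
      · rw [dif_neg (by omega : ¬(1 ≤ i.val ∧ i.val ≤ j - 1)), dif_neg h]
    | succ r hr IH =>
      intro x i
      rw [pow_succ, ContinuousLinearMap.mul_apply, IH]
      by_cases h : 1 ≤ i.val ∧ i.val + (r + 1) ≤ j
      · rw [dif_pos (by omega : 1 ≤ i.val ∧ i.val + r ≤ j), hQ,
          dif_pos (by simp only []; omega : 1 ≤ (⟨i.val + r, by have := i.2; omega⟩ : Fin n).val ∧
            (⟨i.val + r, by have := i.2; omega⟩ : Fin n).val ≤ j - 1), dif_pos h]
        exact congrArg x (Fin.ext (show i.val + r + 1 = i.val + (r + 1) by omega))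
      · by_cases h2 : 1 ≤ i.val ∧ i.val + r ≤ j
        · rw [dif_pos h2, hQ, dif_neg (by simp only []; omega), dif_neg h]
        · rw [dif_neg h2, dif_neg h]
  have hQzero : ∀ r, j ≤ r → ∀ (x : EuclideanSpace ℝ (Fin n)) (i : Fin n), (Q ^ r) x i = 0 := by
    intro r hr x i
    rw [hQpow r (le_trans hj1 hr), dif_neg (by omega)]
  -- Part 2 : Q^j = 0
  have part2 : Q ^ j = 0 := by
    apply ContinuousLinearMap.ext
    intro x
    ext i
    rw [hQzero j le_rfl]
    rfl
  -- Part 3 : Q^(j-1) ≠ 0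
  have part3 : Q ^ (j - 1) ≠ 0 := by
    rcases eq_or_lt_of_le hj1 with hj | hj
    · have hj0 : j - 1 = 0 := by omega
      rw [hj0, pow_zero]
      intro h0
      have h1 := DFunLike.congr_fun h0 (EuclideanSpace.single ⟨0, by omega⟩ (1 : ℝ))
      rw [ContinuousLinearMap.one_apply, ContinuousLinearMap.zero_apply] at h1
      have h2 := congrFun (congrArg WithLp.ofLp h1) ⟨0, by omega⟩
      simp [EuclideanSpace.single_apply] at h2
    · intro h0
      have hjn : j < n := by omega
      have h1 := DFunLike.congr_fun h0 (EuclideanSpace.single ⟨j, hjn⟩ (1 : ℝ))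
      have h2 := congrFun (congrArg WithLp.ofLp h1) ⟨1, by omega⟩
      rw [hQpow (j - 1) (by omega), dif_pos (show 1 ≤ (1:ℕ) ∧ 1 + (j - 1) ≤ j by omega)] at h2
      have h3 : (0 : EuclideanSpace ℝ (Fin n)) ⟨1, by omega⟩ = 0 := rfl
      rw [ContinuousLinearMap.zero_apply, h3, EuclideanSpace.single_apply] at h2
      split_ifs at h2 with hcond
      · exact one_ne_zero h2
      · exact hcond (Fin.ext (show (1:ℕ) + (j - 1) = j by omega))
  -- Part 4 : A * Q = Q * A
  have part4 : A * Q = Q * A := by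
    apply ContinuousLinearMap.ext
    intro x
    ext i
    rw [ContinuousLinearMap.mul_apply, ContinuousLinearMap.mul_apply, hA, hQ, hQ]
    by_cases hc : 1 ≤ i.val ∧ i.val ≤ j - 1
    · rw [dif_pos hc, dif_pos hc, if_neg (by omega), hA, if_neg (by simp only []; omega)]
    · rw [dif_neg hc, dif_neg hc]
      split_ifs <;> simp
  -- powers of A
  have hApow : ∀ (k : ℕ) (x : EuclideanSpace ℝ (Fin n)) (i : Fin n),
      (A ^ k) x i = (if i.val = 0 then (-1 : ℝ) ^ k else 1) * x i := by
    intro k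
    induction k with
    | zero =>
      intro x i
      rw [pow_zero, ContinuousLinearMap.one_apply]
      split_ifs <;> simp
    | succ k IH =>
      intro x i
      rw [pow_succ, ContinuousLinearMap.mul_apply, IH, hA]
      split_ifs <;> ring
  -- binomial expansion of (A+Q)^k
  have binom : ∀ k : ℕ, (A + Q) ^ k
      = ∑ m ∈ Finset.range (k + 1), (k.choose m) • (A ^ m * Q ^ (k - m)) := by
    intro k
    rw [(show Commute A Q from part4).add_pow]
    apply Finset.sum_congr rfl
    intro m _
    rw [nsmul_eq_mul, (Nat.cast_commute (k.choose m) (A ^ m * Q ^ (k - m))).eq]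
  have hcoordsum : ∀ (s : Finset ℕ) (f : ℕ → EuclideanSpace ℝ (Fin n) →L[ℝ] EuclideanSpace ℝ (Fin n))
      (x : EuclideanSpace ℝ (Fin n)) (i : Fin n),
      (∑ m ∈ s, f m) x i = ∑ m ∈ s, f m x i := by
    intro s f x i
    rw [ContinuousLinearMap.sum_apply]
    rw [WithLp.ofLp_sum]
    exact Finset.sum_apply i s _
  -- coordinate 0 of (A+Q)^k
  have hT0 : ∀ (k : ℕ) (x : EuclideanSpace ℝ (Fin n)),
      ((A + Q) ^ k) x ⟨0, by omega⟩ = (-1 : ℝ) ^ k * x ⟨0, by omega⟩ := by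
    intro k x
    rw [binom k, hcoordsum]
    rw [Finset.sum_eq_single_of_mem k (Finset.self_mem_range_succ k)]
    · simp only [Nat.choose_self, one_smul, Nat.sub_self, pow_zero, mul_one,
        ContinuousLinearMap.mul_apply, ContinuousLinearMap.one_apply]
      rw [hApow]
      simp
    · intro m hm hmk
      have hkm : 1 ≤ k - m := by
        have := Finset.mem_range.mp hm; omega
      have : (A ^ m * Q ^ (k - m)) x ⟨0, by omega⟩ = 0 := by
        rw [ContinuousLinearMap.mul_apply, hApow]
        have hq0 : (Q ^ (k - m)) x ⟨0, by omega⟩ = 0 := by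
          rw [hQpow (k - m) hkm, dif_neg (by simp only []; omega)]
        rw [hq0, mul_zero]
      have hsmul : ((k.choose m) • (A ^ m * Q ^ (k - m))) x ⟨0, by omega⟩
          = (k.choose m : ℝ) • ((A ^ m * Q ^ (k - m)) x ⟨0, by omega⟩) := by
        rw [ContinuousLinearMap.smul_apply]
        simp
      rw [hsmul, this, smul_zero]
  -- other coordinates of (A+Q)^k
  have hTi : ∀ (k : ℕ) (x : EuclideanSpace ℝ (Fin n)) (i : Fin n), i.val ≠ 0 →
      ((A + Q) ^ k) x i = ∑ r ∈ Finset.range j, (k.choose r : ℝ) * ((Q ^ r) x i) := by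
    intro k x i hi
    have step1 : ((A + Q) ^ k) x i
        = ∑ m ∈ Finset.range (k + 1), (k.choose m : ℝ) * ((Q ^ (k - m)) x i) := by
      rw [binom k, hcoordsum]
      apply Finset.sum_congr rfl
      intro m _
      have hsmul : ((k.choose m) • (A ^ m * Q ^ (k - m))) x i
          = (k.choose m : ℝ) • ((A ^ m * Q ^ (k - m)) x i) := by
        rw [ContinuousLinearMap.smul_apply]; simp
      rw [hsmul, ContinuousLinearMap.mul_apply, hApow, if_neg hi, one_mul, smul_eq_mul]
    have step2 : ∑ m ∈ Finset.range (k + 1), (k.choose m : ℝ) * ((Q ^ (k - m)) x i)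
        = ∑ m ∈ Finset.range (k + 1), (k.choose m : ℝ) * ((Q ^ m) x i) := by
      rw [← Finset.sum_range_reflect (fun m => (k.choose m : ℝ) * ((Q ^ m) x i)) (k + 1)]
      apply Finset.sum_congr rfl
      intro m hm
      have hmk : m ≤ k := by have := Finset.mem_range.mp hm; omega
      have e1 : k + 1 - 1 - m = k - m := by omega
      rw [e1, Nat.choose_symm hmk]
    have step3 : ∑ m ∈ Finset.range (k + 1), (k.choose m : ℝ) * ((Q ^ m) x i)
        = ∑ r ∈ Finset.range j, (k.choose r : ℝ) * ((Q ^ r) x i) := by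
      have hsub1 : Finset.range (k + 1) ⊆ Finset.range (k + 1 + j) := by
        apply Finset.range_subset_range.mpr; omega
      have hsub2 : Finset.range j ⊆ Finset.range (k + 1 + j) := by
        apply Finset.range_subset_range.mpr; omega
      rw [Finset.sum_subset hsub1, Finset.sum_subset hsub2]
      · intro r _ hr
        rw [hQzero r (by have := Finset.mem_range.not.mp hr; omega), mul_zero]
      · intro r _ hr
        rw [Nat.choose_eq_zero_of_lt (by have := Finset.mem_range.not.mp hr; omega)]
        simp
    rw [step1, step2, step3]
  refine ⟨part1, part2, part3, part4, ?_⟩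
  -- Part 5 : (A+Q) is a (2j-1)-isometry
  intro x
  classical
  set i0 : Fin n := ⟨0, by omega⟩ with hi0
  set P : Fin n → Polynomial ℝ := fun i => ∑ r ∈ Finset.range j,
    Polynomial.C (((Q ^ r) x i) / (r.factorial : ℝ)) * descPochhammer ℝ r with hP
  set p : Polynomial ℝ := Polynomial.C ((x i0) ^ 2)
    + ∑ i ∈ Finset.univ.erase i0, (P i) ^ 2 with hp
  have hPeval : ∀ (i : Fin n) (k : ℕ),
      (P i).eval (k : ℝ) = ∑ r ∈ Finset.range j, (k.choose r : ℝ) * ((Q ^ r) x i) := by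
    intro i k
    rw [hP]
    simp only [Polynomial.eval_finset_sum, Polynomial.eval_mul, Polynomial.eval_C]
    apply Finset.sum_congr rfl
    intro r _
    rw [descPochhammer_eval_eq_descFactorial, Nat.descFactorial_eq_factorial_mul_choose]
    have hfac : (r.factorial : ℝ) ≠ 0 := by exact_mod_cast r.factorial_ne_zero
    push_cast
    field_simp
  have hnormsq : ∀ v : EuclideanSpace ℝ (Fin n), ‖v‖ ^ 2 = ∑ i, (v i) ^ 2 := by
    intro v
    rw [EuclideanSpace.norm_eq, Real.sq_sqrt (by positivity)]
    apply Finset.sum_congr rfl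
    intro i _
    rw [Real.norm_eq_abs, sq_abs]
  have hkey : ∀ k : ℕ, ‖((A + Q) ^ k) x‖ ^ 2 = p.eval (k : ℝ) := by
    intro k
    rw [hnormsq, ← Finset.add_sum_erase Finset.univ _ (Finset.mem_univ i0), hp]
    simp only [Polynomial.eval_add, Polynomial.eval_C, Polynomial.eval_finset_sum,
      Polynomial.eval_pow]
    congr 1
    · rw [hT0 k x, mul_pow, ← pow_mul, mul_comm k 2, pow_mul, neg_one_sq, one_pow, one_mul]
    · apply Finset.sum_congr rfl
      intro i hi
      have hi' : i.val ≠ 0 := by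
        intro h
        exact (Finset.mem_erase.mp hi).1 (Fin.ext h)
      rw [hTi k x i hi', hPeval]
  have hdeg : p.degree < ((2 * j - 1 : ℕ) : WithBot ℕ) := by
    have hPdeg : ∀ i, (P i).degree ≤ ((j - 1 : ℕ) : WithBot ℕ) := by
      intro i
      rw [hP]
      refine le_trans (Polynomial.degree_sum_le _ _) ?_
      apply Finset.sup_le
      intro r hr
      refine le_trans (Polynomial.degree_mul_le _ _) ?_
      refine le_trans (add_le_add Polynomial.degree_C_le (Polynomial.degree_le_natDegree)) ?_
      rw [zero_add, descPochhammer_natDegree]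
      have h' : r ≤ j - 1 := by have := Finset.mem_range.mp hr; omega
      exact_mod_cast h'
    have hsq : ∀ i, ((P i) ^ 2).degree ≤ ((2 * j - 2 : ℕ) : WithBot ℕ) := by
      intro i
      rw [sq]
      refine le_trans (Polynomial.degree_mul_le _ _) ?_
      refine le_trans (add_le_add (hPdeg i) (hPdeg i)) ?_
      rw [← Nat.cast_add]
      have h' : j - 1 + (j - 1) ≤ 2 * j - 2 := by omega
      exact_mod_cast h'
    rw [hp]
    refine lt_of_le_of_lt (Polynomial.degree_add_le _ _) ?_
    apply max_lt
    · refine lt_of_le_of_lt Polynomial.degree_C_le ?_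
      exact_mod_cast (show 0 < 2 * j - 1 by omega)
    · refine lt_of_le_of_lt (Polynomial.degree_sum_le _ _) ?_
      refine lt_of_le_of_lt (Finset.sup_le fun i _ => hsq i) ?_
      exact_mod_cast (show 2 * j - 2 < 2 * j - 1 by omega)
  have h0 : (fwdDiff 1)^[2 * j - 1] (fun k : ℕ => p.eval (k : ℝ)) 0 = 0 :=
    fwdDiff_iter_poly_eval' _ p hdeg 0
  have hsum := fwdDiff_iter_eq_sum_shift (1 : ℕ) (fun k : ℕ => p.eval (k : ℝ)) (2 * j - 1) 0
  rw [h0] at hsum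
  refine Eq.trans (Finset.sum_congr rfl fun k _ => ?_) hsum.symm
  rw [hkey k]
  simp only [smul_eq_mul, mul_one, zero_add, zsmul_eq_mul, Int.cast_mul, Int.cast_pow,
    Int.cast_neg, Int.cast_one, Int.cast_natCast]
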